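/- Let Ω ⊆ ℝ^d be bounded and open, let α, β > 0, let c : ℝ → ℝ be continuous with c ≥ 0, and let d : ℝ → ℝ be continuously differentiable. Let V be a finite-dimensional linear subspace of the space of functions ℝ^d → ℝ all of whose elements are continuously differentiable on ℝ^d. Let S : ℝ → V be a continuously differentiable curve (with respect to the canonical finite-dimensional topology on V, and with derivative S'(t) ∈ V) such that for all t ∈ ℝ and all v ∈ V: ∫_Ω [ c(|∇S(t)(x)|) S'(t)(x) v(x) + α ∇S(t)(x)·∇v(x) + β d'(S(t)(x)) v(x) ] dx = 0. Then t ↦ E(S(t)) is differentiable with derivative d/dt E(S(t)) = − ∫_Ω c(|∇S(t)(x)|) |S'(t)(x)|² dx ≤ 0. -/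

import Mathlib

open MeasureTheory Set
open scoped RealInnerProductSpace

private lemma gradient_finsum' {n : ℕ} {ι : Type*} (s : Finset ι)
    (f : ι → EuclideanSpace ℝ (Fin n) → ℝ) (co : ι → ℝ)
    (hf : ∀ i, Differentiable ℝ (f i)) (x : EuclideanSpace ℝ (Fin n)) :
    gradient (fun y => ∑ i ∈ s, co i * f i y) x = ∑ i ∈ s, co i • gradient (f i) x := by
  have hdiff : ∀ i ∈ s, DifferentiableAt ℝ (fun y => co i * f i y) x :=
    fun i _ => ((hf i) x).const_mul (co i)
  unfold gradient
  rw [fderiv_fun_sum hdiff]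
  rw [map_sum]
  refine Finset.sum_congr rfl fun i _ => ?_
  rw [fderiv_const_mul ((hf i) x)]
  exact (InnerProductSpace.toDual ℝ (EuclideanSpace ℝ (Fin n))).symm.map_smul _ _

/-- The free energy `E(S) = ∫_Ω (α/2)|∇S|² + β d(S) dx`. -/
noncomputable def energy {n : ℕ} (Ω : Set (EuclideanSpace ℝ (Fin n))) (α β : ℝ)
    (d : ℝ → ℝ) (S : EuclideanSpace ℝ (Fin n) → ℝ) : ℝ :=
  ∫ x in Ω, (α / 2 * ‖gradient S x‖ ^ 2 + β * d (S x))

set_option maxHeartbeats 2000000 in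
theorem energy_decay_galerkin
    {n : ℕ} (Ω : Set (EuclideanSpace ℝ (Fin n)))
    (hΩb : Bornology.IsBounded Ω) (hΩo : IsOpen Ω)
    (α β : ℝ) (hα : 0 < α) (hβ : 0 < β)
    (c : ℝ → ℝ) (hc : Continuous c) (hcnn : ∀ x, 0 ≤ c x)
    (d : ℝ → ℝ) (hd : ContDiff ℝ 1 d)
    (V : Submodule ℝ (EuclideanSpace ℝ (Fin n) → ℝ))
    (hVfin : FiniteDimensional ℝ V)
    (hVsmooth : ∀ f ∈ V, ContDiff ℝ 1 f)
    (S S' : ℝ → EuclideanSpace ℝ (Fin n) → ℝ)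
    (hSV : ∀ t, S t ∈ V) (hS'V : ∀ t, S' t ∈ V)
    (hSderiv : ∀ x, ∀ t : ℝ, HasDerivAt (fun s => S s x) (S' t x) t)
    (hS'cont : ∀ x, Continuous (fun t => S' t x))
    (hvar : ∀ t : ℝ, ∀ v ∈ V,
      ∫ x in Ω, (c ‖gradient (S t) x‖ * S' t x * v x
        + α * ⟪gradient (S t) x, gradient v x⟫ + β * deriv d (S t x) * v x) = 0) :
    ∀ t : ℝ, HasDerivAt (fun s => energy Ω α β d (S s))
        (-∫ x in Ω, c ‖gradient (S t) x‖ * (S' t x) ^ 2) t ∧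
      -∫ x in Ω, c ‖gradient (S t) x‖ * (S' t x) ^ 2 ≤ 0 := by
  classical
  -- Step 1: every dual functional differentiates/continues along the curve
  have key : ∀ φ : Module.Dual ℝ V,
      (∀ t, HasDerivAt (fun s => φ ⟨S s, hSV s⟩) (φ ⟨S' t, hS'V t⟩) t)
        ∧ Continuous (fun t => φ ⟨S' t, hS'V t⟩) := by
    set ev : EuclideanSpace ℝ (Fin n) → Module.Dual ℝ V :=
      fun x => (LinearMap.proj x).comp V.subtype with hev
    have hspan : Submodule.span ℝ (Set.range ev) = ⊤ := by
      have hco : (Submodule.span ℝ (Set.range ev)).dualCoannihilator = ⊥ := by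
        rw [Submodule.eq_bot_iff]
        intro v hv
        rw [Submodule.mem_dualCoannihilator] at hv
        ext x
        exact hv (ev x) (Submodule.subset_span ⟨x, rfl⟩)
      have h2 := Subspace.dualCoannihilator_dualAnnihilator_eq
        (W := Submodule.span ℝ (Set.range ev))
      rw [hco] at h2
      rw [← h2, Submodule.dualAnnihilator_bot]
    intro φ
    have hφ : φ ∈ Submodule.span ℝ (Set.range ev) := hspan ▸ Submodule.mem_top
    induction hφ using Submodule.span_induction with
    | mem ψ h =>
      obtain ⟨x, rfl⟩ := h
      exact ⟨fun t => hSderiv x t, hS'cont x⟩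
    | zero => exact ⟨fun t => by simpa using hasDerivAt_const t (0:ℝ), continuous_const⟩
    | add ψ χ _ _ hψ hχ =>
      exact ⟨fun t => by simpa using (hψ.1 t).fun_add (hχ.1 t), by simpa using hψ.2.fun_add hχ.2⟩
    | smul a ψ _ hψ =>
      exact ⟨fun t => by simpa using (hψ.1 t).const_mul a, by
        simpa using continuous_const.fun_mul hψ.2⟩
  -- Step 2: basis coordinates
  set b : Module.Basis (Fin (Module.finrank ℝ V)) ℝ V := Module.finBasis ℝ V with hb
  set a : Fin (Module.finrank ℝ V) → ℝ → ℝ :=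
    fun i t => b.coord i ⟨S t, hSV t⟩ with ha_def
  set a' : Fin (Module.finrank ℝ V) → ℝ → ℝ :=
    fun i t => b.coord i ⟨S' t, hS'V t⟩ with ha'_def
  have ha : ∀ i t, HasDerivAt (a i) (a' i t) t := fun i t => (key (b.coord i)).1 t
  have ha' : ∀ i, Continuous (a' i) := fun i => (key (b.coord i)).2
  have haC : ∀ i, Continuous (a i) :=
    fun i => continuous_iff_continuousAt.mpr fun t => (ha i t).continuousAt
  -- representation of S, S' and gradients via the basis
  have hcoe : ∀ (v : V) x, (v : EuclideanSpace ℝ (Fin n) → ℝ) x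
      = ∑ i, b.repr v i * (b i : EuclideanSpace ℝ (Fin n) → ℝ) x := by
    intro v x
    conv_lhs => rw [← b.sum_repr v]
    rw [AddSubmonoidClass.coe_finset_sum]
    simp [Finset.sum_apply]
  have hSfun : ∀ t, S t = fun x => ∑ i, a i t * (b i : EuclideanSpace ℝ (Fin n) → ℝ) x := by
    intro t; funext x
    exact hcoe ⟨S t, hSV t⟩ x
  have hS'fun : ∀ t, S' t = fun x => ∑ i, a' i t * (b i : EuclideanSpace ℝ (Fin n) → ℝ) x := by
    intro t; funext x
    exact hcoe ⟨S' t, hS'V t⟩ x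
  have hbdiff : ∀ i, Differentiable ℝ ((b i : EuclideanSpace ℝ (Fin n) → ℝ)) :=
    fun i => (hVsmooth _ (b i).2).differentiable one_ne_zero
  have hgradS : ∀ t x, gradient (S t) x
      = ∑ i, a i t • gradient ((b i : EuclideanSpace ℝ (Fin n) → ℝ)) x := by
    intro t x
    rw [hSfun t]
    exact gradient_finsum' Finset.univ _ _ hbdiff x
  have hgradS' : ∀ t x, gradient (S' t) x
      = ∑ i, a' i t • gradient ((b i : EuclideanSpace ℝ (Fin n) → ℝ)) x := by
    intro t x
    rw [hS'fun t]
    exact gradient_finsum' Finset.univ _ _ hbdiff x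
  -- derivative of the gradient curve
  have hgt : ∀ x t, HasDerivAt (fun s => gradient (S s) x) (gradient (S' t) x) t := by
    intro x t
    have h := HasDerivAt.fun_sum (u := Finset.univ)
      (A := fun i s => a i s • gradient ((b i : EuclideanSpace ℝ (Fin n) → ℝ)) x)
      (A' := fun i => a' i t • gradient ((b i : EuclideanSpace ℝ (Fin n) → ℝ)) x)
      (fun i _ => (ha i t).smul_const _)
    rw [← hgradS' t x] at h
    rw [show (fun s => gradient (S s) x) = _ from funext fun s => hgradS s x]
    exact h
  -- continuity facts
  have hbgradc : ∀ i, Continuous (gradient ((b i : EuclideanSpace ℝ (Fin n) → ℝ))) := by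
    intro i
    have : Continuous (fderiv ℝ ((b i : EuclideanSpace ℝ (Fin n) → ℝ))) :=
      (hVsmooth _ (b i).2).continuous_fderiv one_ne_zero
    exact (InnerProductSpace.toDual ℝ (EuclideanSpace ℝ (Fin n))).symm.continuous.comp this
  have hbc : ∀ i, Continuous ((b i : EuclideanSpace ℝ (Fin n) → ℝ)) :=
    fun i => (hbdiff i).continuous
  have hgC : Continuous (fun p : ℝ × EuclideanSpace ℝ (Fin n) => gradient (S p.1) p.2) := by
    have : Continuous (fun p : ℝ × EuclideanSpace ℝ (Fin n) =>
        ∑ i, a i p.1 • gradient ((b i : EuclideanSpace ℝ (Fin n) → ℝ)) p.2) :=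
      continuous_finset_sum _ fun i _ =>
        ((haC i).comp continuous_fst).smul ((hbgradc i).comp continuous_snd)
    convert this using 1
    funext p
    exact hgradS p.1 p.2
  have hg'C : Continuous (fun p : ℝ × EuclideanSpace ℝ (Fin n) => gradient (S' p.1) p.2) := by
    have : Continuous (fun p : ℝ × EuclideanSpace ℝ (Fin n) =>
        ∑ i, a' i p.1 • gradient ((b i : EuclideanSpace ℝ (Fin n) → ℝ)) p.2) :=
      continuous_finset_sum _ fun i _ =>
        ((ha' i).comp continuous_fst).smul ((hbgradc i).comp continuous_snd)
    convert this using 1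
    funext p
    exact hgradS' p.1 p.2
  have hSC : Continuous (fun p : ℝ × EuclideanSpace ℝ (Fin n) => S p.1 p.2) := by
    have : Continuous (fun p : ℝ × EuclideanSpace ℝ (Fin n) =>
        ∑ i, a i p.1 * (b i : EuclideanSpace ℝ (Fin n) → ℝ) p.2) :=
      continuous_finset_sum _ fun i _ =>
        ((haC i).comp continuous_fst).mul ((hbc i).comp continuous_snd)
    convert this using 1
    funext p
    rw [hSfun p.1]
  have hS'C : Continuous (fun p : ℝ × EuclideanSpace ℝ (Fin n) => S' p.1 p.2) := by
    have : Continuous (fun p : ℝ × EuclideanSpace ℝ (Fin n) =>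
        ∑ i, a' i p.1 * (b i : EuclideanSpace ℝ (Fin n) → ℝ) p.2) :=
      continuous_finset_sum _ fun i _ =>
        ((ha' i).comp continuous_fst).mul ((hbc i).comp continuous_snd)
    convert this using 1
    funext p
    rw [hS'fun p.1]
  -- the integrands
  set F : ℝ → EuclideanSpace ℝ (Fin n) → ℝ :=
    fun s x => α / 2 * ‖gradient (S s) x‖ ^ 2 + β * d (S s x) with hF_def
  set F' : ℝ → EuclideanSpace ℝ (Fin n) → ℝ := fun s x =>
    α * ⟪gradient (S s) x, gradient (S' s) x⟫ + β * (deriv d (S s x) * S' s x) with hF'_def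
  -- pointwise derivative of F
  have hFd : ∀ x t, HasDerivAt (fun s => F s x) (F' t x) t := by
    intro x t
    have h1 : HasDerivAt (fun s => ⟪gradient (S s) x, gradient (S s) x⟫)
        (⟪gradient (S t) x, gradient (S' t) x⟫ + ⟪gradient (S' t) x, gradient (S t) x⟫) t :=
      HasDerivAt.inner ℝ (hgt x t) (hgt x t)
    have h1' : HasDerivAt (fun s => ‖gradient (S s) x‖ ^ 2)
        (2 * ⟪gradient (S t) x, gradient (S' t) x⟫) t := by
      have heq : (fun s => ‖gradient (S s) x‖ ^ 2)
          = fun s => ⟪gradient (S s) x, gradient (S s) x⟫ := by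
        funext s; rw [real_inner_self_eq_norm_sq]
      rw [heq]
      convert h1 using 1
      rw [real_inner_comm (gradient (S' t) x)]
      ring
    have hdd : HasDerivAt d (deriv d (S t x)) (S t x) :=
      (hd.differentiable one_ne_zero (S t x)).hasDerivAt
    have h2 : HasDerivAt (fun s => d (S s x)) (deriv d (S t x) * S' t x) t :=
      hdd.comp t (hSderiv x t)
    have := (h1'.const_mul (α / 2)).fun_add (h2.const_mul β)
    refine this.congr_deriv ?_
    simp only [hF'_def]
    ring
  -- joint continuity of F and F'
  have hdC : Continuous (deriv d) := hd.continuous_deriv le_rfl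
  have hF'C : Continuous (fun p : ℝ × EuclideanSpace ℝ (Fin n) => F' p.1 p.2) := by
    apply Continuous.add
    · exact continuous_const.mul (hgC.inner hg'C)
    · exact continuous_const.mul (((hdC.comp hSC)).mul hS'C)
  have hFsc : ∀ s, Continuous (F s) := by
    intro s
    simp only [hF_def]
    have h1 : Continuous (fun x => gradient (S s) x) :=
      hgC.comp (continuous_const.prodMk continuous_id)
    have h2 : Continuous (fun x => S s x) :=
      hSC.comp (continuous_const.prodMk continuous_id)
    have h3 : Continuous (fun x => α / 2 * ‖gradient (S s) x‖ ^ 2) :=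
      continuous_const.mul ((h1.norm).pow 2)
    have h4 : Continuous (fun x => β * d (S s x)) :=
      continuous_const.mul (hd.continuous.comp h2)
    exact h3.add h4
  have hF'sc : ∀ s, Continuous (fun x => F' s x) := by
    intro s
    simp only [hF'_def]
    have h1 : Continuous (fun x => gradient (S s) x) :=
      hgC.comp (continuous_const.prodMk continuous_id)
    have h1' : Continuous (fun x => gradient (S' s) x) :=
      hg'C.comp (continuous_const.prodMk continuous_id)
    have h2 : Continuous (fun x => S s x) :=
      hSC.comp (continuous_const.prodMk continuous_id)
    have h2' : Continuous (fun x => S' s x) :=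
      hS'C.comp (continuous_const.prodMk continuous_id)
    have h3 : Continuous (fun x => α * ⟪gradient (S s) x, gradient (S' s) x⟫) :=
      continuous_const.mul (h1.inner h1')
    have h4 : Continuous (fun x => β * (deriv d (S s x) * S' s x)) :=
      continuous_const.mul ((hdC.comp h2).mul h2')
    exact h3.add h4
  -- compactness and measure facts
  have hΩc : IsCompact (closure Ω) := hΩb.isCompact_closure
  have hμ : volume Ω < ⊤ := hΩb.measure_lt_top
  have hint_of_cont : ∀ g : EuclideanSpace ℝ (Fin n) → ℝ, Continuous g →
      IntegrableOn g Ω := by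
    intro g hg
    exact (hg.continuousOn.integrableOn_compact hΩc).mono_set subset_closure
  -- main derivative computation at each t
  intro t
  -- dominated differentiation
  obtain ⟨C, hC⟩ := ((isCompact_closedBall t 1).prod hΩc).exists_bound_of_continuousOn
    hF'C.continuousOn
  have main : HasDerivAt (fun s => ∫ x in Ω, F s x) (∫ x in Ω, F' t x) t ∧
      Integrable (F' t) (volume.restrict Ω) := by
    have h := hasDerivAt_integral_of_dominated_loc_of_deriv_le
      (μ := volume.restrict Ω) (F := F) (F' := F') (x₀ := t) (bound := fun _ => C)
      (s := Metric.ball t 1) (Metric.ball_mem_nhds t one_pos)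
      (Filter.Eventually.of_forall fun s => (hFsc s).aestronglyMeasurable.restrict)
      (hint_of_cont (F t) (hFsc t))
      ((hF'sc t).aestronglyMeasurable.restrict)
      ?_ ?_ ?_
    · exact ⟨h.2, h.1⟩
    · filter_upwards [ae_restrict_mem hΩo.measurableSet] with x hx s hs
      exact hC (s, x) ⟨Metric.ball_subset_closedBall hs, subset_closure hx⟩
    · exact integrableOn_const hμ.ne
    · exact Filter.Eventually.of_forall fun x s _ => hFd x s
  -- identify the derivative using the variational identity
  set G : EuclideanSpace ℝ (Fin n) → ℝ :=
    fun x => c ‖gradient (S t) x‖ * (S' t x) ^ 2 with hG_def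
  have hGc : Continuous G := by
    have h1 : Continuous (fun x => gradient (S t) x) :=
      hgC.comp (continuous_const.prodMk continuous_id)
    have h2 : Continuous (fun x => S' t x) :=
      hS'C.comp (continuous_const.prodMk continuous_id)
    exact (hc.comp h1.norm).mul (h2.pow 2)
  have hGint : IntegrableOn G Ω := hint_of_cont G hGc
  have hvar' : ∫ x in Ω, (G x + F' t x) = 0 := by
    have h := hvar t (S' t) (hS'V t)
    rw [← h]
    congr 1
    funext x
    simp only [hG_def, hF'_def]
    ring
  have hsplit : ∫ x in Ω, (G x + F' t x)
      = (∫ x in Ω, G x) + ∫ x in Ω, F' t x :=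
    integral_add hGint main.2
  have hkey : ∫ x in Ω, F' t x = -∫ x in Ω, G x := by
    rw [hsplit] at hvar'
    linarith
  have henergy : (fun s => energy Ω α β d (S s)) = fun s => ∫ x in Ω, F s x := by
    funext s
    simp only [energy, hF_def]
  have hderiv : HasDerivAt (fun s => energy Ω α β d (S s))
      (-∫ x in Ω, c ‖gradient (S t) x‖ * (S' t x) ^ 2) t := by
    rw [henergy, ← hkey]
    exact main.1
  refine ⟨hderiv, ?_⟩
  have hpos : 0 ≤ ∫ x in Ω, c ‖gradient (S t) x‖ * (S' t x) ^ 2 :=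
    setIntegral_nonneg hΩo.measurableSet fun x _ =>
      mul_nonneg (hcnn _) (sq_nonneg _)
  linarith
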